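/- arXiv:2005.05620 — 4 statements merged into one kernel-verified Lean document; each statement's English description precedes it below -/
import Mathlib

section
/- For an integer n ≥ 2, the greatest common divisor of the binomial coefficients C(n, a) for 0 < a < n equals p if n is a power p^k of a prime p (with k ≥ 1), and equals 1 otherwise. -/
/-- If `p ^ m ∣ n`, then `C(n, p^m) ≡ n / p^m [MOD p]` (a consequence of Lucas). -/
lemma choose_pow_modEq (p : ℕ) (hp : p.Prime) :
    ∀ m n : ℕ, p ^ m ∣ n → Nat.choose n (p ^ m) ≡ n / p ^ m [MOD p] := by
  intro m
  induction m with
  | zero => intro n _; simpa using Nat.ModEq.refl n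
  | succ m ih =>
    intro n hdvd
    haveI : Fact p.Prime := ⟨hp⟩
    have key := Choose.choose_modEq_choose_mod_mul_choose_div_nat
      (p := p) (n := n) (k := p ^ (m + 1))
    have h1 : p ^ (m + 1) % p = 0 := by
      rw [pow_succ']
      exact Nat.mul_mod_right p (p ^ m)
    have h2 : p ^ (m + 1) / p = p ^ m := by
      rw [pow_succ]
      exact Nat.mul_div_cancel _ hp.pos
    rw [h1, h2, Nat.choose_zero_right, one_mul] at key
    have hdvd' : p ^ m ∣ n / p := by
      obtain ⟨t, rfl⟩ := hdvd
      rw [pow_succ', mul_assoc, Nat.mul_div_cancel_left _ hp.pos]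
      exact Dvd.intro t rfl
    have := ih (n / p) hdvd'
    have h3 : n / p / p ^ m = n / p ^ (m + 1) := by
      rw [Nat.div_div_eq_div_mul, ← pow_succ']
    rw [h3] at this
    exact key.trans this

/-- `C(p^k, p^(k-1))` is divisible by `p` but not by `p^2`. -/
lemma not_sq_dvd_choose (p k : ℕ) (hp : p.Prime) (hk : 1 ≤ k) :
    ¬ p ^ 2 ∣ Nat.choose (p ^ k) (p ^ (k - 1)) := by
  have hle : p ^ (k - 1) ≤ p ^ k := Nat.pow_le_pow_right hp.pos (Nat.sub_le k 1)
  have hne : p ^ (k - 1) ≠ 0 := (Nat.pow_pos hp.pos).ne'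
  have hmult := hp.emultiplicity_choose_prime_pow hle hne
  have hm : multiplicity p (p ^ (k - 1)) = k - 1 :=
    multiplicity_pow_self_of_prime hp.prime (k - 1)
  rw [hm] at hmult
  have hk1 : k - (k - 1) = 1 := by omega
  rw [hk1] at hmult
  rw [← emultiplicity_lt_iff_not_dvd, hmult]
  norm_num

/-- For `n ≥ 2`, the gcd of the binomial coefficients `C(n, a)` for `0 < a < n`
equals `p` if `n = p ^ k` for a prime `p` and `k ≥ 1`, and equals `1` otherwise. -/
theorem stmt0 (n : ℕ) (hn : 2 ≤ n) :
    (∀ p k : ℕ, p.Prime → 1 ≤ k → n = p ^ k →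
      (Finset.Ioo 0 n).gcd (fun a => n.choose a) = p) ∧
    ((¬ ∃ p k : ℕ, p.Prime ∧ 1 ≤ k ∧ n = p ^ k) →
      (Finset.Ioo 0 n).gcd (fun a => n.choose a) = 1) := by
  set g := (Finset.Ioo 0 n).gcd (fun a => n.choose a) with hg
  have h1mem : (1 : ℕ) ∈ Finset.Ioo 0 n := by
    simp only [Finset.mem_Ioo]; omega
  have hgdvdn : g ∣ n := by
    have := Finset.gcd_dvd (f := fun a => n.choose a) h1mem
    simpa using this
  constructor
  · rintro p k hp hk rfl
    -- p divides every C(p^k, a) with 0 < a < p^k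
    have hpg : p ∣ g := by
      apply Finset.dvd_gcd
      intro a ha
      simp only [Finset.mem_Ioo] at ha
      exact Nat.Prime.dvd_choose_pow hp ha.1.ne' ha.2.ne
    -- g divides p^k, so g is a power of p
    obtain ⟨j, hjk, hgj⟩ := (Nat.dvd_prime_pow hp).mp hgdvdn
    rw [hgj] at hpg ⊢
    -- g divides C(p^k, p^(k-1))
    have hmem : p ^ (k - 1) ∈ Finset.Ioo 0 (p ^ k) := by
      simp only [Finset.mem_Ioo]
      exact ⟨Nat.pow_pos hp.pos,
        Nat.pow_lt_pow_right hp.one_lt (by omega)⟩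
    have hgc : p ^ j ∣ Nat.choose (p ^ k) (p ^ (k - 1)) := by
      have := Finset.gcd_dvd (f := fun a => (p ^ k).choose a) hmem
      rw [← hgj]
      simpa using this
    have hj1 : j ≤ 1 := by
      by_contra h
      exact not_sq_dvd_choose p k hp hk
        ((pow_dvd_pow p (by omega : 2 ≤ j)).trans hgc)
    have hj0 : j ≠ 0 := by
      rintro rfl
      simp only [pow_zero] at hpg
      exact hp.one_lt.ne' (Nat.eq_one_of_dvd_one hpg)
    have : j = 1 := by omega
    rw [this, pow_one]
  · intro hnot
    by_contra hg1
    -- take a prime factor p of g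
    set p := g.minFac with hpdef
    have hgne : g ≠ 1 := hg1
    have hp : p.Prime := Nat.minFac_prime hgne
    have hpg : p ∣ g := Nat.minFac_dvd g
    have hpn : p ∣ n := hpg.trans hgdvdn
    set m := n.factorization p with hm
    have hm1 : 1 ≤ m := by
      rw [hm]
      exact (Nat.Prime.factorization_pos_of_dvd hp (by omega) hpn)
    have hdvd : p ^ m ∣ n := Nat.ordProj_dvd n p
    have hpmn : p ^ m < n := by
      rcases lt_or_eq_of_le (Nat.le_of_dvd (by omega) hdvd) with h | h
      · exact h
      · exact absurd ⟨p, m, hp, hm1, h.symm⟩ hnot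
    have hmem : p ^ m ∈ Finset.Ioo 0 n :=
      Finset.mem_Ioo.mpr ⟨Nat.pow_pos hp.pos, hpmn⟩
    have hgc : p ∣ Nat.choose n (p ^ m) := by
      have := Finset.gcd_dvd (f := fun a => n.choose a) hmem
      exact hpg.trans (by simpa using this)
    have hmod := choose_pow_modEq p hp m n hdvd
    have : p ∣ n / p ^ m := by
      have h0 : Nat.choose n (p ^ m) ≡ 0 [MOD p] :=
        (Nat.modEq_zero_iff_dvd).mpr hgc
      exact (Nat.modEq_zero_iff_dvd).mp (hmod.symm.trans h0)
    exact Nat.not_dvd_ordCompl hp (by omega) this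
end

section
/- Let R be a commutative semi-local ring all of whose residue fields are infinite. Then R has many units: for every n there exist a_1, ..., a_n in R such that every nonempty partial sum of the a_i is a unit of R. -/
/-- In an infinite type with addition (here used for fields), there exist `n`
elements all of whose nonempty partial sums are nonzero. -/
lemma aux_field (K : Type*) [AddCommGroup K] [Infinite K] (n : ℕ) :
    ∃ b : Fin n → K, ∀ J : Finset (Fin n), J.Nonempty → ∑ i ∈ J, b i ≠ 0 := by
  classical
  induction n with
  | zero => exact ⟨fun i => 0, fun J hJ => absurd hJ (by simp [Finset.eq_empty_of_isEmpty J])⟩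
  | succ n ih =>
    obtain ⟨b, hb⟩ := ih
    obtain ⟨c, hc⟩ := Infinite.exists_notMem_finset
      ((Finset.univ : Finset (Finset (Fin n))).image (fun J => -∑ i ∈ J, b i))
    refine ⟨Fin.snoc b c, fun J hJ => ?_⟩
    set J₀ : Finset (Fin n) := Finset.univ.filter (fun i => i.castSucc ∈ J) with hJ₀
    have hkey : ∑ i ∈ J.erase (Fin.last n), (Fin.snoc b c : Fin (n+1) → K) i
        = ∑ i ∈ J₀, b i := by
      rw [show J.erase (Fin.last n) = J₀.image Fin.castSucc by
        ext j
        simp only [Finset.mem_erase, Finset.mem_image, hJ₀, Finset.mem_filter,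
          Finset.mem_univ, true_and]
        constructor
        · rintro ⟨hne, hj⟩
          refine ⟨j.castPred hne, ?_, by simp⟩
          simpa using hj
        · rintro ⟨i, hi, rfl⟩
          exact ⟨Fin.castSucc_lt_last i |>.ne, hi⟩]
      rw [Finset.sum_image (fun a _ b _ h => Fin.castSucc_injective n h)]
      simp
    by_cases hlast : Fin.last n ∈ J
    · rw [← Finset.add_sum_erase _ _ hlast, hkey, Fin.snoc_last]
      intro hcontra
      apply hc
      refine Finset.mem_image.2 ⟨J₀, Finset.mem_univ _, ?_⟩
      exact neg_eq_of_add_eq_zero_left hcontra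
    · rw [← Finset.erase_eq_of_notMem hlast, hkey]
      apply hb
      obtain ⟨j, hj⟩ := hJ
      have hne : j ≠ Fin.last n := fun h => hlast (h ▸ hj)
      exact ⟨j.castPred hne, by simp [hJ₀, hj]⟩

/-- A commutative semi-local ring all of whose residue fields are infinite has many
units: for every `n` there exist `a 0, ..., a (n-1)` all of whose nonempty partial
sums are units. -/
theorem stmt4 (R : Type*) [CommRing R] (h : {I : Ideal R | I.IsMaximal}.Finite)
    (hres : ∀ I : Ideal R, I.IsMaximal → Infinite (R ⧸ I)) (n : ℕ) :
    ∃ a : Fin n → R, ∀ J : Finset (Fin n), J.Nonempty → IsUnit (∑ i ∈ J, a i) := by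
  classical
  have := h.fintype
  set ι := {I : Ideal R | I.IsMaximal}
  set I : ι → Ideal R := fun m => (m : Ideal R)
  have hmax : ∀ m : ι, (I m).IsMaximal := fun m => m.2
  have hcop : Pairwise (Function.onFun IsCoprime I) := fun m m' hne =>
    (Ideal.isCoprime_iff_sup_eq).2 (Ideal.IsMaximal.coprime_of_ne (hmax m) (hmax m') (fun he => hne (Subtype.ext he)))
  have hsurj := Ideal.quotientInfToPiQuotient_surj hcop
  -- choose residues in each quotient
  have hb : ∀ m : ι, ∃ b : Fin n → R ⧸ I m,
      ∀ J : Finset (Fin n), J.Nonempty → ∑ i ∈ J, b i ≠ 0 := fun m =>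
    haveI := hres (I m) (hmax m)
    aux_field (R ⧸ I m) n
  choose b hbspec using hb
  -- lift via CRT
  have hlift : ∀ i : Fin n, ∃ x : R, ∀ m : ι, Ideal.Quotient.mk (I m) x = b m i := by
    intro i
    obtain ⟨y, hy⟩ := hsurj (fun m => b m i)
    obtain ⟨x, rfl⟩ := Ideal.Quotient.mk_surjective y
    refine ⟨x, fun m => ?_⟩
    have := congrFun hy m
    rwa [Ideal.quotientInfToPiQuotient_mk'] at this
  choose a ha using hlift
  refine ⟨a, fun J hJ => ?_⟩
  -- a sum not in any maximal ideal is a unit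
  by_contra hu
  have hspan : Ideal.span {∑ i ∈ J, a i} ≠ ⊤ := by
    rwa [Ne, Ideal.span_singleton_eq_top]
  obtain ⟨M, hM, hle⟩ := Ideal.exists_le_maximal _ hspan
  have hmem : (∑ i ∈ J, a i) ∈ M := hle (Ideal.subset_span rfl)
  have : Ideal.Quotient.mk (I ⟨M, hM⟩) (∑ i ∈ J, a i) = 0 :=
    (Ideal.Quotient.eq_zero_iff_mem).2 hmem
  rw [map_sum] at this
  simp only [ha] at this
  exact hbspec ⟨M, hM⟩ J hJ this
end

section
/- Let R be a commutative ring with no nontrivial idempotents (i.e., Spec R connected). If a ∈ R is an element such that R/(a) is a projective R-module, then a is either zero or a unit. -/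
/-- If a commutative ring `R` has no nontrivial idempotents and `R ⧸ (a)` is a
projective `R`-module, then `a` is zero or a unit. -/
theorem stmt5 (R : Type*) [CommRing R]
    (hidem : ∀ e : R, IsIdempotentElem e → e = 0 ∨ e = 1)
    (a : R) (hproj : Module.Projective R (R ⧸ Ideal.span {a})) :
    a = 0 ∨ IsUnit a := by
  set I : Ideal R := Ideal.span {a} with hI
  -- get a splitting of the quotient map
  obtain ⟨s, hs⟩ := Module.projective_lifting_property I.mkQ
    (LinearMap.id : (R ⧸ I) →ₗ[R] (R ⧸ I)) (Submodule.mkQ_surjective I)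
  set c : R := s (I.mkQ 1) with hc
  have hcomp : ∀ x : R, I.mkQ (s (I.mkQ x)) = I.mkQ x := by
    intro x
    have := congrArg (fun f => f (I.mkQ x)) hs
    simpa using this
  -- c is idempotent
  have hfc : ∀ x : R, s (I.mkQ x) = x * c := by
    intro x
    have : s (I.mkQ (x • (1 : R))) = x • s (I.mkQ 1) := by
      rw [map_smul, map_smul]
    simpa [smul_eq_mul, hc] using this
  have hidc : IsIdempotentElem c := by
    have h1 : I.mkQ c = I.mkQ 1 := hcomp 1
    have : s (I.mkQ c) = s (I.mkQ 1) := by rw [h1]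
    rw [hfc c] at this
    simpa [IsIdempotentElem, hc] using this
  -- a * c = 0 since mkQ a = 0
  have hac : a * c = 0 := by
    have ha0 : I.mkQ a = 0 := by
      rw [Submodule.mkQ_apply, Submodule.Quotient.mk_eq_zero]
      exact Ideal.subset_span rfl
    have := hfc a
    rw [ha0, map_zero] at this
    exact this.symm
  -- 1 - c ∈ I
  have h1c : (1 : R) - c ∈ I := by
    have h0 : I.mkQ (1 - c) = 0 := by
      have h1 : I.mkQ c = I.mkQ 1 := hcomp 1
      rw [map_sub, h1, sub_self]
    rwa [Submodule.mkQ_apply, Submodule.Quotient.mk_eq_zero] at h0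
  rcases hidem c hidc with h0 | h1
  · -- c = 0 : 1 ∈ I, so a is a unit
    right
    rw [h0, sub_zero] at h1c
    rw [hI, Ideal.mem_span_singleton] at h1c
    obtain ⟨b, hb⟩ := h1c
    exact IsUnit.of_mul_eq_one (b := b) hb.symm
  · -- c = 1 : a = a * c = 0
    left
    rw [h1, mul_one] at hac
    exact hac
end

section
/- Let k be a commutative ring, G a group, and M a k[G]-module. Suppose the k-module of G-invariant k-bilinear forms on M is free of rank 1 with basis a form b whose adjoint M → Hom_k(M, k) is injective. Then the k-algebra of G-equivariant k-linear endomorphisms of M is isomorphic to k, via the map sending c ∈ k to c·id. In particular, if k has no nontrivial idempotents, M is indecomposable as a k[G]-module. -/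
/-- If the `G`-invariant `k`-bilinear forms on a `k[G]`-module `M` form a free
`k`-module of rank 1 with basis a form `b` whose adjoint is injective, then every
`G`-equivariant `k`-linear endomorphism of `M` is a unique scalar multiple of the
identity; in particular, if `k` has no nontrivial idempotents, `M` is
indecomposable (every equivariant idempotent endomorphism is `0` or `id`). -/
theorem stmt11 (k G M : Type*) [CommRing k] [Group G] [AddCommGroup M] [Module k M]
    (ρ : Representation k G M)
    (b : M →ₗ[k] M →ₗ[k] k)
    (hbinv : ∀ (g : G) (x y : M), b (ρ g x) (ρ g y) = b x y)
    (hbadj : Function.Injective fun x : M => b x)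
    (hbasis : ∀ B : M →ₗ[k] M →ₗ[k] k,
      (∀ (g : G) (x y : M), B (ρ g x) (ρ g y) = B x y) → ∃! c : k, B = c • b) :
    (∀ f : M →ₗ[k] M, (∀ g : G, f ∘ₗ ρ g = ρ g ∘ₗ f) →
      ∃! c : k, f = c • (LinearMap.id : M →ₗ[k] M)) ∧
    ((∀ e : k, IsIdempotentElem e → e = 0 ∨ e = 1) →
      ∀ f : M →ₗ[k] M, (∀ g : G, f ∘ₗ ρ g = ρ g ∘ₗ f) → f ∘ₗ f = f →
        f = 0 ∨ f = LinearMap.id) := by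
  have key : ∀ f : M →ₗ[k] M, (∀ g : G, f ∘ₗ ρ g = ρ g ∘ₗ f) →
      ∃! c : k, f = c • (LinearMap.id : M →ₗ[k] M) := by
    intro f hf
    set B : M →ₗ[k] M →ₗ[k] k := b ∘ₗ f with hB
    have hBinv : ∀ (g : G) (x y : M), B (ρ g x) (ρ g y) = B x y := by
      intro g x y
      have : f (ρ g x) = ρ g (f x) := congrFun (congrArg DFunLike.coe (hf g)) x
      simp only [hB, LinearMap.comp_apply, this, hbinv]
    obtain ⟨c, hc, hcu⟩ := hbasis B hBinv
    refine ⟨c, ?_, ?_⟩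
    · ext x
      apply hbadj
      have := congrFun (congrArg DFunLike.coe hc) x
      simpa [hB, B] using this
    · intro c' hc'
      apply hcu
      ext x y
      simp [hB, hc', B]
  refine ⟨key, fun hid f hf hidem => ?_⟩
  obtain ⟨c, hc, hcu⟩ := key f hf
  have hc2 : f = (c * c) • (LinearMap.id : M →ₗ[k] M) := by
    conv_lhs => rw [← hidem, hc]
    ext x; simp [hc, mul_smul]
  have : c * c = c := (hcu _ hc2).symm ▸ rfl
  rcases hid c this with h0 | h1
  · left; rw [hc, h0, zero_smul]
  · right; rw [hc, h1, one_smul]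
end
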